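/- arXiv:2111.01849 — 7 statements merged into one kernel-verified Lean document; each statement's English description precedes it below -/
import Mathlib

section
/- Let G be the n×n loop network matrix over a field with G[i+1,i] = g_i for i = 1,…,n-1 and G[1,n] = g_n, all other entries zero, and let P = g_1 * g_2 * ⋯ * g_n with 1 - P ≠ 0. Then I - G is invertible and the diagonal entries of T = (I-G)^{-1} all equal 1/(1-P). -/
/-- The `n × n` network matrix of a directed `n`-cycle: entry `(i+1 mod n, i)` is `g i`. -/
def cycleMatrix {K : Type*} [Field K] {n : ℕ} [NeZero n] (g : Fin n → K) : Matrix (Fin n) (Fin n) K :=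
  Matrix.of fun i j => if i = j + 1 then g j else 0

section aux

variable {K : Type*} [Field K] {n : ℕ} [NeZero n]

private lemma fin_sub_val (a b : Fin n) :
    (a - b).val = if b.val ≤ a.val then a.val - b.val else n + a.val - b.val := by
  rw [Fin.sub_def]
  have hb := b.isLt
  have ha := a.isLt
  rcases le_or_gt b.val a.val with h | h
  · rw [if_pos h]
    have h2 : n - b.val + a.val = n + (a.val - b.val) := by omega
    simp only [h2, Nat.add_mod_left]
    exact Nat.mod_eq_of_lt (by omega)
  · rw [if_neg (not_le.2 h)]
    simp only
    rw [Nat.mod_eq_of_lt (by omega)]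
    omega

private lemma fin_val_one (hn : 2 ≤ n) : (1 : Fin n).val = 1 := by
  rw [Fin.val_one' n]; exact Nat.mod_eq_of_lt hn

private lemma fin_sub_val_inj {j a b : Fin n} (h : (a - j).val = (b - j).val) : a = b :=
  sub_left_injective (Fin.val_injective h)

/-- Products of `g` along the cycle path from `j` up to (but not including) `i`. -/
private def cpath (g : Fin n → K) (i j : Fin n) : K :=
  ∏ k ∈ Finset.univ.filter (fun k => (k - j).val < (i - j).val), g k

private lemma cpath_diag (g : Fin n → K) (j : Fin n) : cpath g j j = 1 := by
  unfold cpath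
  rw [sub_self]
  simp

private lemma cpath_wrap (hn : 2 ≤ n) (g : Fin n → K) (j : Fin n) :
    g (j - 1) * cpath g (j - 1) j = ∏ k, g k := by
  have h1 := fin_val_one (n := n) hn
  have hval : ((j - 1) - j).val = n - 1 := by
    have : (j - 1) - j = 0 - 1 := by abel
    rw [this, fin_sub_val, h1, Fin.val_zero, if_neg (by omega)]
    omega
  have hset : Finset.univ.filter (fun k : Fin n => (k - j).val < ((j - 1) - j).val)
      = Finset.univ.erase (j - 1) := by
    ext k
    simp only [Finset.mem_filter, Finset.mem_erase, Finset.mem_univ, and_true, true_and, hval]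
    constructor
    · intro hk hkj
      rw [hkj] at hk
      omega
    · intro hk
      have hlt : (k - j).val < n := (k - j).isLt
      rcases lt_or_eq_of_le (Nat.le_sub_one_of_lt hlt) with h | h
      · omega
      · exact absurd (fin_sub_val_inj (h.trans hval.symm)) hk
  unfold cpath
  rw [hset]
  exact Finset.mul_prod_erase _ _ (Finset.mem_univ _)

private lemma cpath_step (hn : 2 ≤ n) (g : Fin n → K) {i j : Fin n} (hij : i ≠ j) :
    cpath g i j = g (i - 1) * cpath g (i - 1) j := by
  have h1 := fin_val_one (n := n) hn
  have hd : 1 ≤ (i - j).val := by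
    rcases Nat.eq_zero_or_pos (i - j).val with h | h
    · exact absurd (sub_eq_zero.mp (Fin.val_injective h : i - j = 0)) hij
    · omega
  have hval : ((i - 1) - j).val = (i - j).val - 1 := by
    have heq : (i - 1) - j = (i - j) - 1 := by abel
    rw [heq, fin_sub_val]
    rw [h1, if_pos hd]
  have hmem : (i - 1) ∉ Finset.univ.filter
      (fun k : Fin n => (k - j).val < ((i - 1) - j).val) := by
    simp [hval]
  have hset : Finset.univ.filter (fun k : Fin n => (k - j).val < (i - j).val)
      = insert (i - 1) (Finset.univ.filter
        (fun k : Fin n => (k - j).val < ((i - 1) - j).val)) := by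
    ext k
    simp only [Finset.mem_filter, Finset.mem_insert, Finset.mem_univ, true_and, hval]
    constructor
    · intro hk
      rcases lt_or_eq_of_le (Nat.le_sub_one_of_lt hk) with h | h
      · exact Or.inr h
      · exact Or.inl (fin_sub_val_inj (h.trans hval.symm))
    · rintro (rfl | h)
      · omega
      · omega
  unfold cpath
  rw [hset, Finset.prod_insert hmem]

end aux

/-- For the cycle matrix with loop product `P = ∏ g i` and `1 - P ≠ 0`, `I - G` is
invertible and all diagonal entries of `T = (I - G)⁻¹` equal `(1 - P)⁻¹`. -/
theorem cycle_diag_entries {K : Type*} [Field K] {n : ℕ} [NeZero n] (hn : 2 ≤ n) (g : Fin n → K)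
    (hP : 1 - ∏ i, g i ≠ 0) :
    IsUnit (1 - cycleMatrix g) ∧
      ∀ i, (1 - cycleMatrix g)⁻¹ i i = (1 - ∏ i, g i)⁻¹ := by
  classical
  set P := ∏ i, g i with hPdef
  set B : Matrix (Fin n) (Fin n) K :=
    Matrix.of (fun i j => cpath g i j * (1 - P)⁻¹) with hB
  have key : (1 - cycleMatrix g) * B = 1 := by
    ext i j
    rw [Matrix.mul_apply]
    have hentry : ∀ k : Fin n, (1 - cycleMatrix g) i k * B k j
        = (if k = i then B i j else 0) - (if k = i - 1 then g (i - 1) * B (i - 1) j else 0) := by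
      intro k
      simp only [Matrix.sub_apply, Matrix.one_apply, cycleMatrix, Matrix.of_apply, sub_mul]
      have e1 : (if i = k then (1:K) else 0) * B k j = if k = i then B i j else 0 := by
        rcases eq_or_ne k i with rfl | h
        · simp
        · rw [if_neg (Ne.symm h), if_neg h, zero_mul]
      have e2 : (if i = k + 1 then g k else 0) * B k j
          = if k = i - 1 then g (i - 1) * B (i - 1) j else 0 := by
        rcases eq_or_ne k (i - 1) with rfl | h
        · rw [if_pos rfl, if_pos (by abel)]
        · rw [if_neg, if_neg h, zero_mul]
          intro hc
          exact h (by rw [hc]; abel)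
      rw [e1, e2]
    rw [Finset.sum_congr rfl (fun k _ => hentry k), Finset.sum_sub_distrib,
      Finset.sum_ite_eq' _ i, Finset.sum_ite_eq' _ (i - 1)]
    simp only [Finset.mem_univ, if_true]
    by_cases hij : i = j
    · subst hij
      rw [Matrix.one_apply_eq]
      simp only [hB, Matrix.of_apply]
      rw [cpath_diag, ← mul_assoc, cpath_wrap hn, ← hPdef]
      field_simp
    · rw [Matrix.one_apply_ne hij]
      simp only [hB, Matrix.of_apply]
      rw [cpath_step hn g hij]
      ring
  have hdet : (1 - cycleMatrix g).det * B.det = 1 := by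
    rw [← Matrix.det_mul, key, Matrix.det_one]
  have hu : IsUnit (1 - cycleMatrix g) :=
    (Matrix.isUnit_iff_isUnit_det _).2 (IsUnit.of_mul_eq_one _ hdet)
  refine ⟨hu, fun i => ?_⟩
  rw [Matrix.inv_eq_right_inv key]
  simp only [hB, Matrix.of_apply]
  rw [cpath_diag, one_mul]
end

section
/- Let G be the n×n loop network matrix of a directed n-cycle with edge weights g_1,…,g_n and P = g_1⋯g_n ≠ 1. Define, for distinct indices i, k, P_{ik} as the product of the edge weights along the directed path in the cycle from node k to node i. Then the off-diagonal entries of T = (I-G)^{-1} satisfy T_{ik} = P_{ik}/(1-P). -/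
/-- Product of the edge weights along the directed path from node `a` to node `b`
in the cycle. -/
def pathProd {K : Type*} [Field K] {n : ℕ} [NeZero n] (g : Fin n → K) (a b : Fin n) : K :=
  ∏ t ∈ Finset.range (b - a : Fin n).val, g (a + Fin.ofNat n t)

open Fin.NatCast Fin.CommRing

section aux
variable {K : Type*} [Field K] {n : ℕ} [NeZero n] (g : Fin n → K)

lemma cycleMatrix_apply (i j : Fin n) :
    cycleMatrix g i j = if j = i - 1 then g j else 0 := by
  simp only [cycleMatrix, Matrix.of_apply]
  congr 1
  simp only [eq_iff_iff, eq_sub_iff_add_eq]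
  exact ⟨fun h => h.symm, fun h => h.symm⟩

lemma pathProd_self (a : Fin n) : pathProd g a a = 1 := by
  simp [pathProd]

lemma pathProd_step {i k : Fin n} (h : i ≠ k) :
    pathProd g k i = g (i - 1) * pathProd g k (i - 1) := by
  have hm : (i - k).val ≠ 0 := fun h0 => (sub_ne_zero.mpr h) (Fin.ext (by simp [h0]))
  obtain ⟨m, hm'⟩ := Nat.exists_eq_succ_of_ne_zero hm
  rw [Nat.succ_eq_add_one] at hm'
  have hcast : ((m + 1 : ℕ) : Fin n) = i - k := by
    rw [← hm']; exact Fin.cast_val_eq_self _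
  have hmlt : m < n := by have := (i - k).isLt; omega
  have hmcast : ((m : ℕ) : Fin n) = i - k - 1 := by
    rw [← hcast]; push_cast; ring
  have h1 : (i - 1 - k) = ((m : ℕ) : Fin n) := by rw [hmcast]; ring
  have h2 : (i - 1 - k).val = m := by rw [h1, Fin.val_cast_of_lt hmlt]
  have h3 : k + ((m : ℕ) : Fin n) = i - 1 := by rw [hmcast]; ring
  unfold pathProd
  simp only [Fin.ofNat_eq_cast]
  rw [hm', h2, Finset.prod_range_succ, h3, mul_comm]

lemma pathProd_full (i : Fin n) : g (i - 1) * pathProd g i (i - 1) = ∏ j, g j := by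
  have hn1 : 0 < n := Nat.pos_of_ne_zero (NeZero.ne n)
  have hneg : ((n - 1 : ℕ) : Fin n) = -1 := by
    have h0 : ((n - 1 : ℕ) : Fin n) + 1 = 0 := by
      have e : ((n - 1 : ℕ) : Fin n) + 1 = ((n - 1 + 1 : ℕ) : Fin n) := by push_cast; ring
      rw [e, Nat.sub_add_cancel hn1, Fin.natCast_self]
    linear_combination h0
  have hval : (i - 1 - i).val = n - 1 := by
    have : i - 1 - i = ((n - 1 : ℕ) : Fin n) := by rw [hneg]; ring
    rw [this, Fin.val_cast_of_lt (by omega)]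
  have hlast : i + ((n - 1 : ℕ) : Fin n) = i - 1 := by rw [hneg]; ring
  calc g (i - 1) * pathProd g i (i - 1)
      = ∏ t ∈ Finset.range (n - 1 + 1), g (i + (t : Fin n)) := by
        unfold pathProd; simp only [Fin.ofNat_eq_cast]; rw [hval, Finset.prod_range_succ, hlast]; ring
    _ = ∏ t ∈ Finset.range n, g (i + (t : Fin n)) := by rw [Nat.sub_add_cancel hn1]
    _ = ∏ j, g j := by
        rw [← Fin.prod_univ_eq_prod_range]
        simp only [Fin.cast_val_eq_self]
        exact Fintype.prod_equiv (Equiv.addLeft i) _ _ (fun t => rfl)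

end aux

/-- Off-diagonal entries of `T = (I - G)⁻¹`: `T i k = P_{ik} / (1 - P)`, where `P_{ik}`
is the product of edge weights along the directed path from `k` to `i`. -/
theorem cycle_offdiag_entries {K : Type*} [Field K] {n : ℕ} [NeZero n] (hn : 2 ≤ n)
    (g : Fin n → K) (hP : 1 - ∏ i, g i ≠ 0) :
    ∀ i k : Fin n, i ≠ k →
      (1 - cycleMatrix g)⁻¹ i k = pathProd g k i * (1 - ∏ i, g i)⁻¹ := by
  have key : (1 - cycleMatrix g) *
      Matrix.of (fun i k => pathProd g k i * (1 - ∏ j, g j)⁻¹) = 1 := by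
    ext i k
    simp only [Matrix.mul_apply, Matrix.sub_apply, Matrix.one_apply, Matrix.of_apply,
      cycleMatrix_apply, sub_mul, ite_mul, one_mul, zero_mul, Finset.sum_sub_distrib,
      Finset.sum_ite_eq, Finset.sum_ite_eq', Finset.mem_univ, if_true]
    by_cases hik : i = k
    · subst hik
      rw [pathProd_self, if_pos rfl, ← mul_assoc, pathProd_full]
      field_simp
    · rw [if_neg hik, pathProd_step g hik]
      ring
  intro i k hik
  rw [Matrix.inv_eq_right_inv key]
  rfl
end

section
/- In a directed n-cycle with nonzero edge weights and full loop product P ≠ 1, let T = (I-G)^{-1}. For any node i and any node j with j ∉ {i, i+1}, the edge weight g_i (edge i → i+1) equals T_{ji}/T_{j,i+1} and also equals T_{i+1,j}/T_{ij}. -/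
namespace EdgeAux

open Fin.NatCast Fin.CommRing

variable {K : Type*} [Field K] {n : ℕ} [NeZero n]

/-- Product of weights along the path from `k` to `j` (length `(j-k) mod n`). -/
def W (g : Fin n → K) (k j : Fin n) : K :=
  ∏ t ∈ Finset.range ((j - k).val), g (k + (t : Fin n))

lemma val_sub_one {a : Fin n} (h : a ≠ 0) : (a - 1).val + 1 = a.val := by
  obtain ⟨m, rfl⟩ : ∃ m, n = m + 1 :=
    ⟨n - 1, (Nat.succ_pred_eq_of_pos (Nat.pos_of_ne_zero (NeZero.ne n))).symm⟩
  rw [Fin.coe_sub_one, if_neg h]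
  have : a.val ≠ 0 := fun hh => h (Fin.ext hh)
  omega

lemma W_self (g : Fin n → K) (b : Fin n) : W g b b = 1 := by
  simp [W]

lemma W_ne_zero (g : Fin n → K) (hg : ∀ i, g i ≠ 0) (k j : Fin n) : W g k j ≠ 0 :=
  Finset.prod_ne_zero_iff.2 fun t _ => hg _

/-- Peel the last edge of the path from `j` to `i+1`. -/
lemma W_step (g : Fin n → K) {i j : Fin n} (h : i + 1 ≠ j) :
    W g j (i + 1) = W g j i * g i := by
  have h0 : (i + 1 - j : Fin n) ≠ 0 := fun hh => h (by rwa [sub_eq_zero] at hh)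
  have hx : (i + 1 - j : Fin n).val = (i - j).val + 1 := by
    have := val_sub_one h0
    have e : (i + 1 - j - 1 : Fin n) = i - j := by ring
    rw [e] at this
    omega
  rw [W, W, hx, Finset.prod_range_succ]
  congr 1
  rw [Fin.cast_val_eq_self]
  congr 1
  ring

/-- Peel the first edge of the path from `i` to `j`. -/
lemma W_cons (g : Fin n → K) {i j : Fin n} (h : j ≠ i) :
    W g i j = g i * W g (i + 1) j := by
  have h0 : (j - i : Fin n) ≠ 0 := fun hh => h (by rwa [sub_eq_zero] at hh)
  have hx : (j - i : Fin n).val = (j - (i + 1)).val + 1 := by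
    have := val_sub_one h0
    have e : (j - i - 1 : Fin n) = j - (i + 1) := by ring
    rw [e] at this
    omega
  rw [W, W, hx, Finset.prod_range_succ']
  have h0' : g (i + ((0 : ℕ) : Fin n)) = g i := by norm_num
  rw [h0', mul_comm]
  congr 1
  apply Finset.prod_congr rfl
  intro t _
  congr 1
  push_cast
  ring

/-- The explicit inverse of `1 - cycleMatrix g`. -/
def Sm (g : Fin n → K) : Matrix (Fin n) (Fin n) K :=
  Matrix.of fun r c => W g c r / (1 - ∏ i, g i)

lemma full_loop (g : Fin n → K) (b : Fin n) :
    g (b - 1) * W g b (b - 1) = ∏ i, g i := by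
  obtain ⟨m, rfl⟩ : ∃ m, n = m + 1 :=
    ⟨n - 1, (Nat.succ_pred_eq_of_pos (Nat.pos_of_ne_zero (NeZero.ne n))).symm⟩
  have hval : (b - 1 - b : Fin (m + 1)).val = m := by
    have e : (b - 1 - b : Fin (m + 1)) = 0 - 1 := by ring
    rw [e, Fin.coe_sub_one, if_pos rfl]
  have hcast : ((m : ℕ) : Fin (m + 1)) = -1 := by
    apply Fin.ext
    have e : (-1 : Fin (m + 1)) = 0 - 1 := by ring
    rw [e, Fin.coe_sub_one, if_pos rfl, Fin.val_cast_of_lt (Nat.lt_succ_self m)]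
  have key : ∏ t ∈ Finset.range (m + 1), g (b + (t : Fin (m + 1))) = ∏ i, g i := by
    have h1 : ∏ i : Fin (m + 1), g (b + ((i : ℕ) : Fin (m + 1))) =
        ∏ t ∈ Finset.range (m + 1), g (b + (t : Fin (m + 1))) :=
      Fin.prod_univ_eq_prod_range (fun t => g (b + (t : Fin (m + 1)))) (m + 1)
    rw [← h1]
    simp only [Fin.cast_val_eq_self]
    exact Equiv.prod_comp (Equiv.addLeft b) g
  have hb : b + (-1 : Fin (m + 1)) = b - 1 := by ring
  have h2 : ∏ t ∈ Finset.range (m + 1), g (b + (t : Fin (m + 1))) =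
      (∏ t ∈ Finset.range m, g (b + (t : Fin (m + 1)))) * g (b - 1) := by
    rw [Finset.prod_range_succ, hcast, hb]
  rw [W, hval]
  exact (mul_comm _ _).trans (h2.symm.trans key)

lemma right_inv (g : Fin n → K) (hP : 1 - ∏ i, g i ≠ 0) :
    (1 - cycleMatrix g) * Sm g = 1 := by
  ext a b
  rw [Matrix.mul_apply]
  have hsum : ∀ k : Fin n, ((1 - cycleMatrix g) a k) * Sm g k b =
      (if a = k then Sm g a b else 0) - (if k = a - 1 then g (a - 1) * Sm g (a - 1) b else 0) := by
    intro k
    simp only [Matrix.sub_apply, Matrix.one_apply, cycleMatrix, Matrix.of_apply, sub_mul]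
    congr 1
    · split
      · next h => subst h; rw [one_mul]
      · rw [zero_mul]
    · by_cases hk : k = a - 1
      · subst hk
        rw [if_pos (by ring), if_pos rfl]
      · rw [if_neg, if_neg hk, zero_mul]
        intro hh
        exact hk (by rw [hh]; ring)
  rw [Finset.sum_congr rfl (fun k _ => hsum k), Finset.sum_sub_distrib,
    Finset.sum_ite_eq Finset.univ a, Finset.sum_ite_eq' Finset.univ (a - 1),
    if_pos (Finset.mem_univ a), if_pos (Finset.mem_univ (a - 1))]
  simp only [Sm, Matrix.of_apply, Matrix.one_apply]
  by_cases hab : a = b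
  · subst hab
    rw [if_pos rfl, W_self]
    rw [show g (a - 1) * (W g a (a - 1) / (1 - ∏ i, g i)) =
      (g (a - 1) * W g a (a - 1)) / (1 - ∏ i, g i) by ring, full_loop]
    field_simp
  · rw [if_neg hab]
    have h1 : a - 1 + 1 ≠ b := by rwa [sub_add_cancel]
    have := W_step g h1
    rw [sub_add_cancel] at this
    rw [this]
    ring

end EdgeAux

/-- For nonzero edge weights and `1 - P ≠ 0`, the weight `g i` of the edge `i → i+1` is
recovered from entries of `T = (I-G)⁻¹`: `g i = T j i / T j (i+1) = T (i+1) j / T i j`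
for any node `j ∉ {i, i+1}`. -/
theorem edge_from_T_entries {K : Type*} [Field K] {n : ℕ} [NeZero n] (hn : 2 ≤ n)
    (g : Fin n → K) (hg : ∀ i, g i ≠ 0) (hP : 1 - ∏ i, g i ≠ 0) :
    let T := (1 - cycleMatrix g)⁻¹
    ∀ i j : Fin n, j ≠ i → j ≠ i + 1 →
      g i = T j i / T j (i + 1) ∧ g i = T (i + 1) j / T i j := by
  intro T i j hji hji1
  have hT : T = EdgeAux.Sm g := Matrix.inv_eq_right_inv (EdgeAux.right_inv g hP)
  rw [hT]
  simp only [EdgeAux.Sm, Matrix.of_apply]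
  have hW := EdgeAux.W_ne_zero g hg
  constructor
  · rw [EdgeAux.W_cons g hji, div_div_div_cancel_right₀ hP,
      mul_div_assoc, div_self (hW _ _), mul_one]
  · rw [EdgeAux.W_step g (fun h => hji1 h.symm), div_div_div_cancel_right₀ hP,
      mul_comm, mul_div_assoc, div_self (hW _ _), mul_one]
end

section
/- In a directed n-cycle with nonzero edge weights, suppose nodes k and n are measured (i.e. rows k and n of T are available restricted to excited columns) and nodes k+1 and 1 are excited, with 1 ≤ k ≤ n-2. Then (T_{n1} * T_{k,k+1}) / (T_{k1} * T_{n,k+1}) = P, the full loop product; i.e. these four entries of T = (I-G)^{-1} determine P. -/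
namespace CycleAux

open Fin.NatCast

lemma mod_small {n x : ℕ} (hn : 0 < n) (hx : x < 2 * n) :
    x % n = if x < n then x else x - n := by
  split
  · exact Nat.mod_eq_of_lt ‹_›
  · rw [Nat.mod_eq_sub_mod (by omega), Nat.mod_eq_of_lt (by omega)]

variable {K : Type*} [Field K] {n : ℕ} [NeZero n]

/-- Product of the weights along the directed path from `j` to `i`. -/
def w (g : Fin n → K) (j i : Fin n) : K :=
  ∏ m ∈ Finset.range ((i.val + n - j.val) % n), g ((j.val + m : ℕ) : Fin n)

/-- Candidate inverse of `1 - cycleMatrix g`. -/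
noncomputable def M (g : Fin n → K) : Matrix (Fin n) (Fin n) K :=
  Matrix.of fun i j => (1 - ∏ t, g t)⁻¹ * w g j i

lemma w_full (g : Fin n → K) (j : Fin n) :
    ∏ m ∈ Finset.range n, g ((j.val + m : ℕ) : Fin n) = ∏ t, g t := by
  have h1 : ∏ m ∈ Finset.range n, g ((j.val + m : ℕ) : Fin n)
      = ∏ x : Fin n, g (j + x) := by
    rw [← Fin.prod_univ_eq_prod_range (fun m => g ((j.val + m : ℕ) : Fin n)) n]
    refine Finset.prod_congr rfl fun x _ => ?_
    have hx : ((j.val + x.val : ℕ) : Fin n) = j + x := by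
      apply Fin.ext
      simp [Fin.val_natCast, Fin.add_def]
    rw [hx]
  rw [h1]
  exact Equiv.prod_comp (Equiv.addLeft j) (fun x => g x)

lemma w_self (g : Fin n → K) (j : Fin n) : w g j j = 1 := by
  have h : j.val + n - j.val = n := by omega
  simp [w, h]

lemma w_step (g : Fin n → K) {i j : Fin n} (hij : i ≠ j) :
    w g j i = w g j (i - 1) * g (i - 1) := by
  have ha : i.val < n := i.isLt
  have hb : j.val < n := j.isLt
  have hab : i.val ≠ j.val := fun h => hij (Fin.ext h)
  have hn2 : 2 ≤ n := by omega
  have h1n : (1 : ℕ) % n = 1 := Nat.mod_eq_of_lt hn2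
  have hc : (i - 1).val = (n - 1 + i.val) % n := by
    rw [Fin.sub_def]
    simp [h1n]
  set a := i.val with ha'
  set b := j.val with hb'
  set c := (i - 1).val with hc'
  have hcv : (c = n - 1 ∧ a = 0) ∨ (c = a - 1 ∧ 1 ≤ a) := by
    rw [mod_small (by omega) (by omega)] at hc
    split at hc <;> omega
  have hcn : c < n := (i - 1).isLt
  have hd : (a + n - b) % n = (c + n - b) % n + 1 := by
    rw [mod_small (by omega) (by omega), mod_small (by omega) (by omega)]
    split_ifs <;> omega
  have hd'v : (c + n - b) % n = c + n - b ∨ (c + n - b) % n + n = c + n - b := by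
    rw [mod_small (by omega) (by omega)]; split_ifs <;> omega
  have hdlt : (c + n - b) % n < n := Nat.mod_lt _ (by omega)
  have hlast : ((b + (c + n - b) % n : ℕ) : Fin n) = i - 1 := by
    apply Fin.ext
    rw [Fin.val_natCast, ← hc']
    rw [mod_small (by omega) (by omega)]
    split_ifs <;> omega
  unfold w
  rw [hd, Finset.prod_range_succ, hlast]

lemma w_loop (g : Fin n → K) (hn2 : 2 ≤ n) (j : Fin n) :
    g (j - 1) * w g j (j - 1) = ∏ t, g t := by
  have hb : j.val < n := j.isLt
  have h1n : (1 : ℕ) % n = 1 := Nat.mod_eq_of_lt hn2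
  have hc : (j - 1).val = (n - 1 + j.val) % n := by
    rw [Fin.sub_def]
    simp [h1n]
  set b := j.val with hb'
  set c := (j - 1).val with hc'
  have hcv : (c = n - 1 ∧ b = 0) ∨ (c = b - 1 ∧ 1 ≤ b) := by
    rw [mod_small (by omega) (by omega)] at hc
    split at hc <;> omega
  have hd : (c + n - b) % n = n - 1 := by
    rw [mod_small (by omega) (by omega)]
    split_ifs <;> omega
  have hlast : ((b + (n - 1) : ℕ) : Fin n) = j - 1 := by
    apply Fin.ext
    rw [Fin.val_natCast, ← hc']
    rw [mod_small (by omega) (by omega)]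
    split_ifs <;> omega
  unfold w
  rw [hd, mul_comm, ← hlast, ← Finset.prod_range_succ (fun m => g ((b + m : ℕ) : Fin n)) (n - 1)]
  have hsucc : n - 1 + 1 = n := by omega
  rw [hsucc]
  exact w_full g j

lemma cyc_mul_inv (g : Fin n → K) (hn2 : 2 ≤ n) (hP : 1 - ∏ t, g t ≠ 0) :
    (1 - cycleMatrix g) * M g = 1 := by
  ext i j
  rw [Matrix.mul_apply]
  simp only [Matrix.sub_apply, Matrix.one_apply, cycleMatrix, M, Matrix.of_apply, sub_mul]
  rw [Finset.sum_sub_distrib]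
  have e1 : ∑ l, (if i = l then (1:K) else 0) * ((1 - ∏ t, g t)⁻¹ * w g j l)
      = (1 - ∏ t, g t)⁻¹ * w g j i := by
    simp [ite_mul]
  have e2 : ∑ l, (if i = l + 1 then g l else 0) * ((1 - ∏ t, g t)⁻¹ * w g j l)
      = g (i - 1) * ((1 - ∏ t, g t)⁻¹ * w g j (i - 1)) := by
    have hcong : ∀ l : Fin n, (if i = l + 1 then g l else 0)
        = if l = i - 1 then g l else 0 := by
      intro l
      exact if_congr (eq_comm.trans eq_sub_iff_add_eq.symm) rfl rfl
    simp only [hcong]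
    simp [ite_mul]
  rw [e1, e2]
  by_cases hij : i = j
  · subst hij
    rw [w_self]
    have hl := w_loop g hn2 i
    have : (1 - ∏ t, g t)⁻¹ * 1 - g (i - 1) * ((1 - ∏ t, g t)⁻¹ * w g i (i - 1))
        = (1 - ∏ t, g t)⁻¹ * (1 - g (i - 1) * w g i (i - 1)) := by ring
    rw [this, hl, if_pos rfl]
    exact inv_mul_cancel₀ hP
  · rw [w_step g hij, if_neg hij]
    ring

end CycleAux

open CycleAux Fin.NatCast in
/-- If nodes `k` and `n` are measured and nodes `k+1` and `1` are excited
(1-based labels; `1 ≤ k ≤ n-2`), then the four observed entries of `T = (I-G)⁻¹`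
determine the loop product: `(T_{n1} T_{k,k+1})/(T_{k1} T_{n,k+1}) = P`. -/
theorem two_ME_pairs_determine_P {K : Type*} [Field K] {n : ℕ} [NeZero n] (hn : 2 ≤ n)
    (k : ℕ) (hk1 : 1 ≤ k) (hk2 : k ≤ n - 2)
    (g : Fin n → K) (hg : ∀ i, g i ≠ 0) (hP : 1 - ∏ i, g i ≠ 0) :
    let T := (1 - cycleMatrix g)⁻¹
    (T ⟨n - 1, by omega⟩ ⟨0, by omega⟩ * T ⟨k - 1, by omega⟩ ⟨k, by omega⟩) /
        (T ⟨k - 1, by omega⟩ ⟨0, by omega⟩ * T ⟨n - 1, by omega⟩ ⟨k, by omega⟩) =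
      ∏ i, g i := by
  intro T
  have h3 : 3 ≤ n := by omega
  have hkn : k ≤ n - 2 := hk2
  have hT : T = M g := Matrix.inv_eq_right_inv (cyc_mul_inv g hn hP)
  rw [hT]
  have hful : ∏ m ∈ Finset.range n, g ((0 + m : ℕ) : Fin n) = ∏ t, g t :=
    w_full g ⟨0, by omega⟩
  have e1 : (n - 1 + n - 0) % n = n - 1 := by
    rw [mod_small (by omega) (by omega)]; split_ifs <;> omega
  have e2 : (k - 1 + n - k) % n = n - 1 := by
    rw [mod_small (by omega) (by omega)]; split_ifs <;> omega
  have e3 : (k - 1 + n - 0) % n = k - 1 := by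
    rw [mod_small (by omega) (by omega)]; split_ifs <;> omega
  have e4 : (n - 1 + n - k) % n = n - 1 - k := by
    rw [mod_small (by omega) (by omega)]; split_ifs <;> omega
  have EA : M g ⟨n - 1, by omega⟩ ⟨0, by omega⟩
      = (1 - ∏ t, g t)⁻¹ * ∏ m ∈ Finset.range (n - 1), g ((0 + m : ℕ) : Fin n) := by
    show (1 - ∏ t, g t)⁻¹ * ∏ m ∈ Finset.range ((n - 1 + n - 0) % n), g ((0 + m : ℕ) : Fin n) = _
    rw [e1]
  have EB : M g ⟨k - 1, by omega⟩ ⟨k, by omega⟩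
      = (1 - ∏ t, g t)⁻¹ * ∏ m ∈ Finset.range (n - 1), g ((k + m : ℕ) : Fin n) := by
    show (1 - ∏ t, g t)⁻¹ * ∏ m ∈ Finset.range ((k - 1 + n - k) % n), g ((k + m : ℕ) : Fin n) = _
    rw [e2]
  have EC : M g ⟨k - 1, by omega⟩ ⟨0, by omega⟩
      = (1 - ∏ t, g t)⁻¹ * ∏ m ∈ Finset.range (k - 1), g ((0 + m : ℕ) : Fin n) := by
    show (1 - ∏ t, g t)⁻¹ * ∏ m ∈ Finset.range ((k - 1 + n - 0) % n), g ((0 + m : ℕ) : Fin n) = _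
    rw [e3]
  have ED : M g ⟨n - 1, by omega⟩ ⟨k, by omega⟩
      = (1 - ∏ t, g t)⁻¹ * ∏ m ∈ Finset.range (n - 1 - k), g ((k + m : ℕ) : Fin n) := by
    show (1 - ∏ t, g t)⁻¹ * ∏ m ∈ Finset.range ((n - 1 + n - k) % n), g ((k + m : ℕ) : Fin n) = _
    rw [e4]
  rw [EA, EB, EC, ED]
  -- the key product identity
  have hA : ∏ m ∈ Finset.range (n - 1), g ((0 + m : ℕ) : Fin n)
      = (∏ m ∈ Finset.range (k - 1), g ((0 + m : ℕ) : Fin n)) *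
        ∏ m ∈ Finset.range (n - k), g ((0 + (k - 1 + m) : ℕ) : Fin n) := by
    have h := Finset.prod_range_add (fun m => g ((0 + m : ℕ) : Fin n)) (k - 1) (n - k)
    rw [show k - 1 + (n - k) = n - 1 from by omega] at h
    exact h
  have hB : ∏ m ∈ Finset.range (n - 1), g ((k + m : ℕ) : Fin n)
      = (∏ m ∈ Finset.range (n - 1 - k), g ((k + m : ℕ) : Fin n)) *
        ∏ m ∈ Finset.range k, g ((k + (n - 1 - k + m) : ℕ) : Fin n) := by
    have h := Finset.prod_range_add (fun m => g ((k + m : ℕ) : Fin n)) (n - 1 - k) k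
    rw [show n - 1 - k + k = n - 1 from by omega] at h
    exact h
  have hPfull : ∏ t, g t
      = (∏ m ∈ Finset.range (k - 1), g ((0 + m : ℕ) : Fin n)) *
        ∏ m ∈ Finset.range (n - k + 1), g ((0 + (k - 1 + m) : ℕ) : Fin n) := by
    have h := Finset.prod_range_add (fun m => g ((0 + m : ℕ) : Fin n)) (k - 1) (n - k + 1)
    rw [show k - 1 + (n - k + 1) = n from by omega, hful] at h
    exact h
  have hZ : ∏ m ∈ Finset.range (n - k + 1), g ((0 + (k - 1 + m) : ℕ) : Fin n)
      = (∏ m ∈ Finset.range (n - k), g ((0 + (k - 1 + m) : ℕ) : Fin n)) *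
        g ((n - 1 : ℕ) : Fin n) := by
    have h := Finset.prod_range_succ (fun m => g ((0 + (k - 1 + m) : ℕ) : Fin n)) (n - k)
    rw [show 0 + (k - 1 + (n - k)) = n - 1 from by omega] at h
    exact h
  have hY : ∏ m ∈ Finset.range k, g ((k + (n - 1 - k + m) : ℕ) : Fin n)
      = g ((n - 1 : ℕ) : Fin n) *
        ∏ m ∈ Finset.range (k - 1), g ((0 + m : ℕ) : Fin n) := by
    have h0 : ∏ m ∈ Finset.range k, g ((k + (n - 1 - k + m) : ℕ) : Fin n)
        = ∏ m ∈ Finset.range k, g ((n - 1 + m : ℕ) : Fin n) := by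
      refine Finset.prod_congr rfl fun m _ => ?_
      rw [show k + (n - 1 - k + m) = n - 1 + m from by omega]
    rw [h0]
    have h := Finset.prod_range_succ' (fun m => g ((n - 1 + m : ℕ) : Fin n)) (k - 1)
    rw [show k - 1 + 1 = k from by omega, show n - 1 + 0 = n - 1 from by omega] at h
    rw [h, mul_comm]
    congr 1
    refine Finset.prod_congr rfl fun m _ => ?_
    congr 1
    rw [Fin.ext_iff, Fin.val_natCast, Fin.val_natCast,
      show n - 1 + (m + 1) = n + m from by omega, Nat.zero_add, Nat.add_mod_left]
  have key : (∏ m ∈ Finset.range (n - 1), g ((0 + m : ℕ) : Fin n)) *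
        ∏ m ∈ Finset.range (n - 1), g ((k + m : ℕ) : Fin n)
      = (∏ t, g t) *
        ((∏ m ∈ Finset.range (k - 1), g ((0 + m : ℕ) : Fin n)) *
          ∏ m ∈ Finset.range (n - 1 - k), g ((k + m : ℕ) : Fin n)) := by
    rw [hA, hB, hY, hPfull, hZ]
    ring
  have hC0 : (∏ m ∈ Finset.range (k - 1), g ((0 + m : ℕ) : Fin n)) ≠ 0 :=
    Finset.prod_ne_zero_iff.mpr fun m _ => hg _
  have hD0 : (∏ m ∈ Finset.range (n - 1 - k), g ((k + m : ℕ) : Fin n)) ≠ 0 :=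
    Finset.prod_ne_zero_iff.mpr fun m _ => hg _
  have hI : (1 - ∏ t, g t)⁻¹ ≠ 0 := inv_ne_zero hP
  rw [div_eq_iff (mul_ne_zero (mul_ne_zero hI hC0) (mul_ne_zero hI hD0))]
  linear_combination ((1 - ∏ t, g t)⁻¹ * (1 - ∏ t, g t)⁻¹) * key
end

section
/- Let n ≥ 2 and consider a directed n-cycle whose edge weights g_1,…,g_n are nonzero and whose loop product P satisfies 1-P ≠ 0. Suppose a second cycle matrix G' with edge weights g'_1,…,g'_n, loop product P', 1-P' ≠ 0, satisfies (I-G)^{-1}_{ik} = (I-G')^{-1}_{ik} for all i, k in {1,…,n} (full excitation and measurement). Then g_i = g'_i for all i. -/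
open Fin.NatCast Fin.CommRing in
lemma cycle_pow {K : Type*} [Field K] {n : ℕ} [NeZero n] (g : Fin n → K) (k : ℕ) :
    (cycleMatrix g) ^ k =
      Matrix.of (fun a b => if a = b + (k : Fin n)
        then ∏ j : Fin k, g (b + ((j : ℕ) : Fin n)) else 0) := by
  induction k with
  | zero =>
    ext a b
    simp [Matrix.one_apply]
  | succ k ih =>
    ext a b
    rw [pow_succ, Matrix.mul_apply]
    have hb : ∀ c : Fin n, cycleMatrix g c b = if c = b + 1 then g b else 0 := fun c => rfl
    simp only [ih, hb, Matrix.of_apply, mul_ite, mul_zero, ite_mul, zero_mul]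
    rw [Finset.sum_ite_eq' Finset.univ (b + 1) (fun c => if a = c + (k : Fin n) then (∏ j : Fin k, g (c + ((j:ℕ):Fin n))) * g b else 0)]
    simp only [Finset.mem_univ, if_true]
    rw [show ((k+1 : ℕ) : Fin n) = (k : Fin n) + 1 from by push_cast; ring,
        show b + ((k:Fin n)+1) = b + 1 + (k:Fin n) from by ring]
    split_ifs with h
    · rw [Fin.prod_univ_succ, mul_comm]
      congr 1
      · congr 1
        simp
      · apply Finset.prod_congr rfl
        intro j _
        congr 1
        rw [Fin.val_succ]
        push_cast
        ring
    · rfl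

open Fin.NatCast Fin.CommRing in
lemma cycle_pow_n {K : Type*} [Field K] {n : ℕ} [NeZero n] (g : Fin n → K) :
    (cycleMatrix g) ^ n = (∏ i, g i) • (1 : Matrix (Fin n) (Fin n) K) := by
  rw [cycle_pow]
  ext a b
  have h1 : ((n : ℕ) : Fin n) = 0 := by simp
  have h2 : (∏ j : Fin n, g (b + ((j : ℕ) : Fin n))) = ∏ i, g i := by
    apply Fintype.prod_equiv (Equiv.addLeft b)
    intro j
    simp [Equiv.addLeft, Fin.cast_val_eq_self]
  simp only [Matrix.of_apply, h1, add_zero, h2, Matrix.smul_apply, Matrix.one_apply]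
  split_ifs <;> simp

lemma cycle_isUnit_det {K : Type*} [Field K] {n : ℕ} [NeZero n] (g : Fin n → K)
    (hP : 1 - ∏ i, g i ≠ 0) : IsUnit (1 - cycleMatrix g).det := by
  set G := cycleMatrix g
  have key : (1 - G) * ((1 - ∏ i, g i)⁻¹ • ∑ i ∈ Finset.range n, G ^ i) = 1 := by
    rw [Matrix.mul_smul, ← neg_sub G 1, neg_mul, mul_geom_sum, cycle_pow_n, neg_sub,
      show (1 : Matrix (Fin n) (Fin n) K) - (∏ i, g i) • 1 = (1 - ∏ i, g i) • (1 : Matrix (Fin n) (Fin n) K) from by rw [sub_smul, one_smul],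
      smul_smul, inv_mul_cancel₀ hP, one_smul]
  exact isUnit_iff_ne_zero.mpr (Matrix.det_ne_zero_of_right_inverse key)

/-- Full excitation and measurement identifies the cycle: if two cycle matrices with
nonzero edge weights and well-posed loops have the same closed-loop matrix
`T = (I-G)⁻¹` entrywise, then their edge weights coincide. -/
theorem full_EMP_identifies_cycle {K : Type*} [Field K] {n : ℕ} [NeZero n] (hn : 2 ≤ n)
    (g g' : Fin n → K) (hg : ∀ i, g i ≠ 0) (hg' : ∀ i, g' i ≠ 0)
    (hP : 1 - ∏ i, g i ≠ 0) (hP' : 1 - ∏ i, g' i ≠ 0)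
    (hT : ∀ i k : Fin n, (1 - cycleMatrix g)⁻¹ i k = (1 - cycleMatrix g')⁻¹ i k) :
    ∀ i, g i = g' i := by
  have hU : IsUnit (1 - cycleMatrix g).det := cycle_isUnit_det g hP
  have hU' : IsUnit (1 - cycleMatrix g').det := cycle_isUnit_det g' hP'
  have hinv : (1 - cycleMatrix g)⁻¹ = (1 - cycleMatrix g')⁻¹ := by
    ext a b; exact hT a b
  have hEq : (1 - cycleMatrix g) = (1 - cycleMatrix g') := by
    rw [← Matrix.nonsing_inv_nonsing_inv _ hU, hinv, Matrix.nonsing_inv_nonsing_inv _ hU']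
  have hG : cycleMatrix g = cycleMatrix g' := by have := sub_right_injective hEq; simpa using this
  intro i
  have h := congrFun (congrFun hG (i + 1)) i
  simpa [cycleMatrix] using h
end

section
/- For the 2-node loop with nonzero edge weights g_1 (edge 1→2) and g_2 (edge 2→1), if no node is both excited and measured and the necessary condition B ∪ C = {1,2}, B ≠ ∅, C ≠ ∅ holds, then exactly one off-diagonal entry of T = (I-G)^{-1} is observed, and there exist two distinct pairs (g_1, g_2) ≠ (g_1', g_2') of nonzero edge weights yielding the same observed entry. Hence the 2-node loop is not identifiable without a node that is both excited and measured. -/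
/-- The network matrix of the 2-node loop with edge weights `g 0` (edge 1→2) and
`g 1` (edge 2→1). -/
def twoLoop (g : Fin 2 → ℝ) : Matrix (Fin 2) (Fin 2) ℝ :=
  !![0, g 1; g 0, 0]

lemma inv1 : (1 - twoLoop ![1, 2])⁻¹ = !![-1, -2; -1, -1] := by
  apply Matrix.inv_eq_right_inv
  ext i j
  fin_cases i <;> fin_cases j <;>
    simp [twoLoop, Matrix.mul_apply, Fin.sum_univ_two, Matrix.one_apply] <;> norm_num

lemma inv2 : (1 - twoLoop ![-(1/2 : ℝ), -1])⁻¹ = !![2, -2; -1, 2] := by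
  apply Matrix.inv_eq_right_inv
  ext i j
  fin_cases i <;> fin_cases j <;>
    simp [twoLoop, Matrix.mul_apply, Fin.sum_univ_two, Matrix.one_apply] <;> norm_num

/-- For the 2-node loop, if no node is both excited and measured while the necessary
condition `B ∪ C = {1,2}`, `B ≠ ∅`, `C ≠ ∅` holds, then exactly one (off-diagonal)
entry of `T = (I-G)⁻¹` is observed, and two distinct pairs of nonzero edge weights
yield the same observed entry: the loop is not identifiable. -/
theorem two_node_loop_not_identifiable (B C : Finset (Fin 2))
    (hcover : B ∪ C = Finset.univ) (hB : B.Nonempty) (hC : C.Nonempty)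
    (hdisj : B ∩ C = ∅) :
    (∃! p : Fin 2 × Fin 2, p.1 ∈ C ∧ p.2 ∈ B) ∧
    (∀ p : Fin 2 × Fin 2, p.1 ∈ C → p.2 ∈ B → p.1 ≠ p.2) ∧
    ∃ g g' : Fin 2 → ℝ,
      (∀ i, g i ≠ 0) ∧ (∀ i, g' i ≠ 0) ∧
      1 - g 0 * g 1 ≠ 0 ∧ 1 - g' 0 * g' 1 ≠ 0 ∧
      g ≠ g' ∧
      ∀ i ∈ C, ∀ j ∈ B, (1 - twoLoop g)⁻¹ i j = (1 - twoLoop g')⁻¹ i j := by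
  have hcases : (B = {0} ∧ C = {1}) ∨ (B = {1} ∧ C = {0}) := by
    have h0 := hB
    revert hcover hB hC hdisj
    fin_cases B <;> fin_cases C <;> decide
  have hwit : ∃ g g' : Fin 2 → ℝ,
      (∀ i, g i ≠ 0) ∧ (∀ i, g' i ≠ 0) ∧
      1 - g 0 * g 1 ≠ 0 ∧ 1 - g' 0 * g' 1 ≠ 0 ∧
      g ≠ g' ∧
      ∀ i j : Fin 2, i ≠ j → (1 - twoLoop g)⁻¹ i j = (1 - twoLoop g')⁻¹ i j := by
    refine ⟨![1, 2], ![-(1/2), -1], ?_, ?_, by norm_num, by norm_num, ?_, ?_⟩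
    · intro i; fin_cases i <;> norm_num
    · intro i; fin_cases i <;> norm_num
    · intro h; have := congrFun h 0; norm_num at this
    · intro i j hij
      rw [inv1, inv2]
      fin_cases i <;> fin_cases j <;> simp_all <;> norm_num
  obtain ⟨g, g', h1, h2, h3, h4, h5, h6⟩ := hwit
  rcases hcases with ⟨hB', hC'⟩ | ⟨hB', hC'⟩ <;> subst hB' <;> subst hC'
  · refine ⟨⟨(1, 0), by simp, ?_⟩, ?_, g, g', h1, h2, h3, h4, h5, ?_⟩
    · rintro ⟨a, b⟩ ⟨ha, hb⟩; simp_all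
    · rintro ⟨a, b⟩ ha hb; simp_all
    · intro i hi j hj
      simp only [Finset.mem_singleton] at hi hj
      subst hi; subst hj; exact h6 _ _ (by decide)
  · refine ⟨⟨(0, 1), by simp, ?_⟩, ?_, g, g', h1, h2, h3, h4, h5, ?_⟩
    · rintro ⟨a, b⟩ ⟨ha, hb⟩; simp_all
    · rintro ⟨a, b⟩ ha hb; simp_all
    · intro i hi j hj
      simp only [Finset.mem_singleton] at hi hj
      subst hi; subst hj; exact h6 _ _ (by decide)
end

section
/- For the 3-node loop with nonzero edge weights g_1, g_2, g_3 and P = g_1 g_2 g_3, 1-P ≠ 0: if no node is both excited and measured and B ∪ C = {1,2,3} with B, C nonempty and disjoint, then at most 2 algebraically independent functions of (g_1,g_2,g_3) are observed, and there exist distinct weight triples (g_1,g_2,g_3) ≠ (g_1',g_2',g_3') giving the same observed submatrix of T = (I-G)^{-1}. Hence the 3-node loop is not identifiable without an excited-and-measured node. -/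
/-- The network matrix of the 3-node loop with edge weights `g 0, g 1, g 2` on the
edges 1→2, 2→3, 3→1. -/
def threeLoop (g : Fin 3 → ℝ) : Matrix (Fin 3) (Fin 3) ℝ :=
  !![0, 0, g 2; g 0, 0, 0; 0, g 1, 0]

lemma invLoop (g : Fin 3 → ℝ) (hd : 1 - g 0 * g 1 * g 2 ≠ 0) :
    (1 - threeLoop g)⁻¹ = (1 - g 0 * g 1 * g 2)⁻¹ •
      !![1, g 1 * g 2, g 2; g 0, 1, g 0 * g 2; g 0 * g 1, g 1, 1] := by
  apply Matrix.inv_eq_right_inv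
  ext i j
  fin_cases i <;> fin_cases j <;>
    simp [threeLoop, Matrix.mul_apply, Fin.sum_univ_three, Matrix.one_apply] <;>
    field_simp [show 1 - g 1 * g 0 * g 2 ≠ 0 by intro h; apply hd; linarith] <;> ring

/-- For the 3-node loop, if no node is both excited and measured while
`B ∪ C = {1,2,3}` with `B, C` nonempty and disjoint, then at most two entries of
`T = (I-G)⁻¹` are observed, and two distinct triples of nonzero edge weights yield the
same observed submatrix: the loop is not identifiable. -/
theorem three_node_loop_not_identifiable (B C : Finset (Fin 3))
    (hcover : B ∪ C = Finset.univ) (hB : B.Nonempty) (hC : C.Nonempty)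
    (hdisj : B ∩ C = ∅) :
    C.card * B.card ≤ 2 ∧
    ∃ g g' : Fin 3 → ℝ,
      (∀ i, g i ≠ 0) ∧ (∀ i, g' i ≠ 0) ∧
      1 - g 0 * g 1 * g 2 ≠ 0 ∧ 1 - g' 0 * g' 1 * g' 2 ≠ 0 ∧
      g ≠ g' ∧
      ∀ i ∈ C, ∀ j ∈ B, (1 - threeLoop g)⁻¹ i j = (1 - threeLoop g')⁻¹ i j := by
  have key : ∀ B C : Finset (Fin 3), B ∪ C = Finset.univ → B.Nonempty → C.Nonempty →
      B ∩ C = ∅ →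
      (B = {0} ∧ C = {1,2}) ∨ (B = {1} ∧ C = {0,2}) ∨ (B = {2} ∧ C = {0,1}) ∨
      (C = {0} ∧ B = {1,2}) ∨ (C = {1} ∧ B = {0,2}) ∨ (C = {2} ∧ B = {0,1}) := by decide
  rcases key B C hcover hB hC hdisj with ⟨hB', hC'⟩ | ⟨hB', hC'⟩ | ⟨hB', hC'⟩ |
    ⟨hC', hB'⟩ | ⟨hC', hB'⟩ | ⟨hC', hB'⟩ <;> subst hB' <;> subst hC'
  · refine ⟨by decide, ![1,1,1/2], ![4,1,-1/4], by intro i; fin_cases i <;> norm_num,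
      by intro i; fin_cases i <;> norm_num, by norm_num [Matrix.cons_val_two, Matrix.tail_cons, Matrix.head_cons], by norm_num [Matrix.cons_val_two, Matrix.tail_cons, Matrix.head_cons],
      by intro h; have := congrFun h 0; norm_num at this, ?_⟩
    rw [invLoop _ (by norm_num [Matrix.cons_val_two, Matrix.tail_cons, Matrix.head_cons]), invLoop _ (by norm_num [Matrix.cons_val_two, Matrix.tail_cons, Matrix.head_cons])]
    intro i hi j hj
    fin_cases hi <;> fin_cases hj <;>
      norm_num [Matrix.cons_val_two, Matrix.tail_cons, Matrix.head_cons, Matrix.smul_apply, Matrix.vecHead, Matrix.vecTail]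
  · refine ⟨by decide, ![1/2,1,1], ![-1/4,4,1], by intro i; fin_cases i <;> norm_num,
      by intro i; fin_cases i <;> norm_num, by norm_num [Matrix.cons_val_two, Matrix.tail_cons, Matrix.head_cons], by norm_num [Matrix.cons_val_two, Matrix.tail_cons, Matrix.head_cons],
      by intro h; have := congrFun h 0; norm_num at this, ?_⟩
    rw [invLoop _ (by norm_num [Matrix.cons_val_two, Matrix.tail_cons, Matrix.head_cons]), invLoop _ (by norm_num [Matrix.cons_val_two, Matrix.tail_cons, Matrix.head_cons])]
    intro i hi j hj
    fin_cases hi <;> fin_cases hj <;>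
      norm_num [Matrix.cons_val_two, Matrix.tail_cons, Matrix.head_cons, Matrix.smul_apply, Matrix.vecHead, Matrix.vecTail]
  · refine ⟨by decide, ![1,1/2,1], ![1,-1/4,4], by intro i; fin_cases i <;> norm_num,
      by intro i; fin_cases i <;> norm_num, by norm_num [Matrix.cons_val_two, Matrix.tail_cons, Matrix.head_cons], by norm_num [Matrix.cons_val_two, Matrix.tail_cons, Matrix.head_cons],
      by intro h; have := congrFun h 1; norm_num at this, ?_⟩
    rw [invLoop _ (by norm_num [Matrix.cons_val_two, Matrix.tail_cons, Matrix.head_cons]), invLoop _ (by norm_num [Matrix.cons_val_two, Matrix.tail_cons, Matrix.head_cons])]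
    intro i hi j hj
    fin_cases hi <;> fin_cases hj <;>
      norm_num [Matrix.cons_val_two, Matrix.tail_cons, Matrix.head_cons, Matrix.smul_apply, Matrix.vecHead, Matrix.vecTail]
  · refine ⟨by decide, ![1/2,1,1], ![-1/4,1,4], by intro i; fin_cases i <;> norm_num,
      by intro i; fin_cases i <;> norm_num, by norm_num [Matrix.cons_val_two, Matrix.tail_cons, Matrix.head_cons], by norm_num [Matrix.cons_val_two, Matrix.tail_cons, Matrix.head_cons],
      by intro h; have := congrFun h 0; norm_num at this, ?_⟩
    rw [invLoop _ (by norm_num [Matrix.cons_val_two, Matrix.tail_cons, Matrix.head_cons]), invLoop _ (by norm_num [Matrix.cons_val_two, Matrix.tail_cons, Matrix.head_cons])]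
    intro i hi j hj
    fin_cases hi <;> fin_cases hj <;>
      norm_num [Matrix.cons_val_two, Matrix.tail_cons, Matrix.head_cons, Matrix.smul_apply, Matrix.vecHead, Matrix.vecTail]
  · refine ⟨by decide, ![1,1/2,1], ![4,-1/4,1], by intro i; fin_cases i <;> norm_num,
      by intro i; fin_cases i <;> norm_num, by norm_num [Matrix.cons_val_two, Matrix.tail_cons, Matrix.head_cons], by norm_num [Matrix.cons_val_two, Matrix.tail_cons, Matrix.head_cons],
      by intro h; have := congrFun h 0; norm_num at this, ?_⟩
    rw [invLoop _ (by norm_num [Matrix.cons_val_two, Matrix.tail_cons, Matrix.head_cons]), invLoop _ (by norm_num [Matrix.cons_val_two, Matrix.tail_cons, Matrix.head_cons])]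
    intro i hi j hj
    fin_cases hi <;> fin_cases hj <;>
      norm_num [Matrix.cons_val_two, Matrix.tail_cons, Matrix.head_cons, Matrix.smul_apply, Matrix.vecHead, Matrix.vecTail]
  · refine ⟨by decide, ![1,1,1/2], ![1,4,-1/4], by intro i; fin_cases i <;> norm_num,
      by intro i; fin_cases i <;> norm_num, by norm_num [Matrix.cons_val_two, Matrix.tail_cons, Matrix.head_cons], by norm_num [Matrix.cons_val_two, Matrix.tail_cons, Matrix.head_cons],
      by intro h; have := congrFun h 1; norm_num at this, ?_⟩
    rw [invLoop _ (by norm_num [Matrix.cons_val_two, Matrix.tail_cons, Matrix.head_cons]), invLoop _ (by norm_num [Matrix.cons_val_two, Matrix.tail_cons, Matrix.head_cons])]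
    intro i hi j hj
    fin_cases hi <;> fin_cases hj <;>
      norm_num [Matrix.cons_val_two, Matrix.tail_cons, Matrix.head_cons, Matrix.smul_apply, Matrix.vecHead, Matrix.vecTail]
end
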